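/- Let Δ be the unit equilateral triangle in ℝ² with vertices (0,0), (1,0), (1/2, √3/2), and let D be the closed disk of radius √3/4 centered at the origin. Then D can hide behind Δ (every orthogonal projection of Δ onto a line is a segment of length at least √3/2), yet the area of D, namely 3π/16, is strictly greater than the area of Δ, namely √3/4. -/

import Mathlib

open scoped Pointwise
open MeasureTheory

/-- Orthogonal projection of a point onto the hyperplane `u^⊥`. -/
noncomputable def proj {n : ℕ} (u x : EuclideanSpace ℝ (Fin n)) : EuclideanSpace ℝ (Fin n) :=
  (Submodule.orthogonalProjectionOnto (ℝ ∙ u)ᗮ x : EuclideanSpace ℝ (Fin n))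

/-- `A` can hide behind `B`: for every unit direction `u` there is a translation vector in
`u^⊥` moving the shadow of `A` inside the shadow of `B`. -/
def HidesBehind {n : ℕ} (A B : Set (EuclideanSpace ℝ (Fin n))) : Prop :=
  ∀ u : EuclideanSpace ℝ (Fin n), ‖u‖ = 1 →
    ∃ v ∈ (ℝ ∙ u)ᗮ, v +ᵥ (proj u '' A) ⊆ proj u '' B

/-- The unit equilateral triangle in `ℝ²`. -/
noncomputable def Δ : Set (EuclideanSpace ℝ (Fin 2)) :=
  convexHull ℝ {!₂[0, 0], !₂[1, 0], !₂[1/2, Real.sqrt 3 / 2]}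

namespace HideAux
open Set
open scoped RealInnerProductSpace

noncomputable def rot (u : EuclideanSpace ℝ (Fin 2)) : EuclideanSpace ℝ (Fin 2) := !₂[-(u 1), u 0]

lemma inner_eq (x y : EuclideanSpace ℝ (Fin 2)) : ⟪x, y⟫ = x 0 * y 0 + x 1 * y 1 := by
  simp [PiLp.inner_apply, Fin.sum_univ_two, RCLike.inner_apply, mul_comm]

lemma rot_apply0 (u : EuclideanSpace ℝ (Fin 2)) : rot u 0 = -(u 1) := rfl
lemma rot_apply1 (u : EuclideanSpace ℝ (Fin 2)) : rot u 1 = u 0 := rfl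

lemma sq_sum (u : EuclideanSpace ℝ (Fin 2)) (hu : ‖u‖ = 1) : u 0 ^ 2 + u 1 ^ 2 = 1 := by
  have h := real_inner_self_eq_norm_sq u
  rw [hu, inner_eq] at h
  nlinarith [h]

lemma norm_rot (u : EuclideanSpace ℝ (Fin 2)) (hu : ‖u‖ = 1) : ‖rot u‖ = 1 := by
  have h := real_inner_self_eq_norm_sq (rot u)
  rw [inner_eq, rot_apply0, rot_apply1] at h
  have h2 := sq_sum u hu
  nlinarith [norm_nonneg (rot u), h, h2]

lemma inner_rot (u : EuclideanSpace ℝ (Fin 2)) : ⟪u, rot u⟫ = 0 := by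
  rw [inner_eq, rot_apply0, rot_apply1]; ring

lemma rot_mem_orth (u : EuclideanSpace ℝ (Fin 2)) : rot u ∈ (ℝ ∙ u)ᗮ :=
  Submodule.mem_orthogonal_singleton_iff_inner_right.2 (inner_rot u)

lemma rot_ne_zero (u : EuclideanSpace ℝ (Fin 2)) (hu : ‖u‖ = 1) : rot u ≠ 0 := by
  intro h
  have := norm_rot u hu
  rw [h] at this; simp at this

lemma proj_eq (u : EuclideanSpace ℝ (Fin 2)) (hu : ‖u‖ = 1) (x : EuclideanSpace ℝ (Fin 2)) :
    proj u x = ⟪rot u, x⟫ • rot u := by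
  have key := Submodule.starProjection_add_starProjection_orthogonal (K := ℝ ∙ u) x
  have h1 : (ℝ ∙ u).starProjection x = ⟪u, x⟫ • u :=
    Submodule.starProjection_unit_singleton ℝ hu x
  have h2 : proj u x = x - ⟪u, x⟫ • u := by
    rw [proj, ← h1, eq_sub_iff_add_eq, add_comm]
    exact key
  rw [h2]
  have hs := sq_sum u hu
  ext i
  fin_cases i
  · simp only [Fin.mk_zero, Fin.isValue, inner_eq, rot_apply0, rot_apply1, PiLp.sub_apply,
      PiLp.smul_apply, smul_eq_mul]
    linear_combination -(x 0) * hs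
  · simp only [Fin.mk_one, Fin.isValue, inner_eq, rot_apply0, rot_apply1, PiLp.sub_apply,
      PiLp.smul_apply, smul_eq_mul]
    linear_combination -(x 1) * hs

lemma proj_image (u : EuclideanSpace ℝ (Fin 2)) (hu : ‖u‖ = 1)
    (S : Set (EuclideanSpace ℝ (Fin 2))) :
    proj u '' S = (fun t : ℝ => t • rot u) '' ((fun x => ⟪rot u, x⟫) '' S) := by
  rw [Set.image_image]
  exact Set.image_congr fun x _ => proj_eq u hu x

lemma convexHull_triple (a b c : ℝ) :
    convexHull ℝ {a, b, c} = Icc (min a (min b c)) (max a (max b c)) := by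
  apply Set.Subset.antisymm
  · apply convexHull_min _ (convex_Icc _ _)
    intro x hx
    simp only [Set.mem_insert_iff, Set.mem_singleton_iff] at hx
    rcases hx with rfl | rfl | rfl
    · exact ⟨min_le_left _ _, le_max_left _ _⟩
    · exact ⟨(min_le_right _ _).trans (min_le_left _ _),
        (le_max_left _ _).trans (le_max_right _ _)⟩
    · exact ⟨(min_le_right _ _).trans (min_le_right _ _),
        (le_max_right _ _).trans (le_max_right _ _)⟩
  · have hm : min a (min b c) ∈ ({a, b, c} : Set ℝ) := by
      rcases min_choice a (min b c) with h | h
      · rw [h]; simp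
      · rw [h]; rcases min_choice b c with h2 | h2 <;> rw [h2] <;> simp
    have hM : max a (max b c) ∈ ({a, b, c} : Set ℝ) := by
      rcases max_choice a (max b c) with h | h
      · rw [h]; simp
      · rw [h]; rcases max_choice b c with h2 | h2 <;> rw [h2] <;> simp
    rw [← segment_eq_Icc ((min_le_left a _).trans (le_max_left a _))]
    exact segment_subset_convexHull hm hM

lemma inner_image_ball (w : EuclideanSpace ℝ (Fin 2)) (hw : ‖w‖ = 1) (r : ℝ) :
    (fun x => ⟪w, x⟫) '' Metric.closedBall 0 r = Icc (-r) r := by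
  ext t
  constructor
  · rintro ⟨x, hx, rfl⟩
    rw [Metric.mem_closedBall, dist_zero_right] at hx
    have h := abs_real_inner_le_norm w x
    rw [hw, one_mul] at h
    have := abs_le.1 (h.trans hx)
    exact ⟨this.1, this.2⟩
  · intro ht
    refine ⟨t • w, ?_, ?_⟩
    · rw [Metric.mem_closedBall, dist_zero_right, norm_smul, hw, mul_one]
      exact abs_le.2 ⟨ht.1, ht.2⟩
    · show ⟪w, t • w⟫ = t
      rw [real_inner_smul_right, real_inner_self_eq_norm_sq, hw]; ring

lemma innerf_isLinear (w : EuclideanSpace ℝ (Fin 2)) :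
    IsLinearMap ℝ (fun x : EuclideanSpace ℝ (Fin 2) => ⟪w, x⟫) :=
  ⟨fun x y => inner_add_right w x y, fun c x => real_inner_smul_right w x c⟩

noncomputable def mval (w : EuclideanSpace ℝ (Fin 2)) : ℝ :=
  min 0 (min (w 0) (w 0 / 2 + w 1 * (Real.sqrt 3 / 2)))

noncomputable def Mval (w : EuclideanSpace ℝ (Fin 2)) : ℝ :=
  max 0 (max (w 0) (w 0 / 2 + w 1 * (Real.sqrt 3 / 2)))

lemma image_triangle (w : EuclideanSpace ℝ (Fin 2)) :
    (fun x => ⟪w, x⟫) '' Δ = Icc (mval w) (Mval w) := by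
  rw [Δ, (innerf_isLinear w).image_convexHull, Set.image_insert_eq, Set.image_insert_eq,
    Set.image_singleton]
  have h0 : ⟪w, (!₂[0, 0] : EuclideanSpace ℝ (Fin 2))⟫ = 0 := by
    rw [inner_eq]; norm_num [Matrix.cons_val_zero, Matrix.cons_val_one, Matrix.head_cons]
  have h1 : ⟪w, (!₂[1, 0] : EuclideanSpace ℝ (Fin 2))⟫ = w 0 := by
    rw [inner_eq]; norm_num [Matrix.cons_val_zero, Matrix.cons_val_one, Matrix.head_cons]
  have h2 : ⟪w, (!₂[1/2, Real.sqrt 3 / 2] : EuclideanSpace ℝ (Fin 2))⟫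
      = w 0 / 2 + w 1 * (Real.sqrt 3 / 2) := by
    rw [inner_eq]
    norm_num [Matrix.cons_val_zero, Matrix.cons_val_one, Matrix.head_cons]
    ring
  rw [h0, h1, h2, convexHull_triple, mval, Mval]

lemma mval_le_Mval (w : EuclideanSpace ℝ (Fin 2)) : mval w ≤ Mval w :=
  (min_le_left _ _).trans (le_max_left _ _)

lemma arith_width (x y s : ℝ) (hwsq : x ^ 2 + y ^ 2 = 1) (hs3 : s ^ 2 = 3) (hspos : 0 < s)
    (e1 : x < s / 2) (e2 : -(s / 2) < x)
    (e3 : x / 2 + y * (s / 2) < s / 2) (e4 : -(s / 2) < x / 2 + y * (s / 2))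
    (e5 : x / 2 + y * (s / 2) - x < s / 2) (e6 : -(s / 2) < x / 2 + y * (s / 2) - x) :
    False := by
  have a1 : 3 * (1 - y) ^ 2 > 1 - y ^ 2 := by
    nlinarith [mul_pos (sub_pos.2 e3) (sub_pos.2 e5), hs3, hspos, hwsq]
  have b1 : 3 * (1 + y) ^ 2 > 1 - y ^ 2 := by
    nlinarith [mul_pos (sub_pos.2 e4) (sub_pos.2 e6), hs3, hspos, hwsq]
  have c1 : y ^ 2 > 1 / 4 := by
    nlinarith [mul_pos (sub_pos.2 e1) (sub_pos.2 e2), hs3, hspos, hwsq]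
  have ysq : y ^ 2 ≤ 1 := by nlinarith [sq_nonneg x]
  rcases le_or_gt y 0 with hy | hy
  · have hy2 : y < -(1 / 2) := by nlinarith
    have hy3 : -1 ≤ y := by nlinarith
    nlinarith [b1, mul_nonneg (by linarith : (0:ℝ) ≤ y + 1) (by linarith : (0:ℝ) ≤ -2 - 4 * y)]
  · have hy2 : y > 1 / 2 := by nlinarith
    have hy3 : y ≤ 1 := by nlinarith
    nlinarith [a1, mul_nonneg (by linarith : (0:ℝ) ≤ 1 - y) (by linarith : (0:ℝ) ≤ 4 * y - 2)]

lemma width (u : EuclideanSpace ℝ (Fin 2)) (hu : ‖u‖ = 1) :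
    Real.sqrt 3 / 2 ≤ Mval (rot u) - mval (rot u) := by
  have hs := sq_sum u hu
  have hwsq : rot u 0 ^ 2 + rot u 1 ^ 2 = 1 := by
    show (-(u 1)) ^ 2 + u 0 ^ 2 = 1
    nlinarith [hs]
  have hs3 : Real.sqrt 3 ^ 2 = 3 := Real.sq_sqrt (by norm_num)
  have hspos : 0 < Real.sqrt 3 := Real.sqrt_pos.2 (by norm_num)
  by_contra hcon
  push_neg at hcon
  have hA1 : mval (rot u) ≤ 0 := min_le_left _ _
  have hA2 : 0 ≤ Mval (rot u) := le_max_left _ _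
  have hB1 : mval (rot u) ≤ rot u 0 := (min_le_right _ _).trans (min_le_left _ _)
  have hB2 : rot u 0 ≤ Mval (rot u) := (le_max_left _ _).trans (le_max_right _ _)
  have hC1 : mval (rot u) ≤ rot u 0 / 2 + rot u 1 * (Real.sqrt 3 / 2) :=
    (min_le_right _ _).trans (min_le_right _ _)
  have hC2 : rot u 0 / 2 + rot u 1 * (Real.sqrt 3 / 2) ≤ Mval (rot u) :=
    (le_max_right _ _).trans (le_max_right _ _)
  exact arith_width (rot u 0) (rot u 1) (Real.sqrt 3) hwsq hs3 hspos
    (by linarith) (by linarith) (by linarith) (by linarith) (by linarith) (by linarith)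

lemma part1 : HidesBehind (Metric.closedBall (0 : EuclideanSpace ℝ (Fin 2)) (Real.sqrt 3 / 4)) Δ := by
  intro u hu
  have hw := norm_rot u hu
  refine ⟨((mval (rot u) + Mval (rot u)) / 2) • rot u,
    Submodule.smul_mem _ _ (rot_mem_orth u), ?_⟩
  intro y hy
  obtain ⟨z, hz, rfl⟩ := hy
  rw [proj_image u hu, inner_image_ball (rot u) hw] at hz
  obtain ⟨t, ht, rfl⟩ := hz
  rw [proj_image u hu, image_triangle]
  refine ⟨(mval (rot u) + Mval (rot u)) / 2 + t, ?_, ?_⟩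
  · have hwid := width u hu
    obtain ⟨ht1, ht2⟩ := ht
    exact ⟨by linarith, by linarith⟩
  · show ((mval (rot u) + Mval (rot u)) / 2 + t) • rot u
      = ((mval (rot u) + Mval (rot u)) / 2) • rot u +ᵥ t • rot u
    rw [add_smul]; rfl


lemma part2 (u : EuclideanSpace ℝ (Fin 2)) (hu : ‖u‖ = 1) :
    ∃ a b : EuclideanSpace ℝ (Fin 2),
      proj u '' Δ = segment ℝ a b ∧ Real.sqrt 3 / 2 ≤ ‖b - a‖ := by
  have hw := norm_rot u hu
  refine ⟨mval (rot u) • rot u, Mval (rot u) • rot u, ?_, ?_⟩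
  · rw [proj_image u hu, image_triangle, ← segment_eq_Icc (mval_le_Mval (rot u))]
    have := image_segment ℝ ((LinearMap.toSpanSingleton ℝ (EuclideanSpace ℝ (Fin 2))
      (rot u)).toAffineMap) (mval (rot u)) (Mval (rot u))
    simpa using this
  · rw [← sub_smul, norm_smul, hw, mul_one, Real.norm_eq_abs,
      abs_of_nonneg (by linarith [mval_le_Mval (rot u)])]
    exact width u hu


lemma tri_char : Δ = {x : EuclideanSpace ℝ (Fin 2) |
    0 ≤ x 1 ∧ x 1 ≤ Real.sqrt 3 * x 0 ∧ x 1 ≤ Real.sqrt 3 * (1 - x 0)} := by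
  have hs : (0:ℝ) < Real.sqrt 3 := Real.sqrt_pos.2 (by norm_num)
  apply Set.Subset.antisymm
  · apply convexHull_min _ ?_
    · intro p hp
      simp only [Set.mem_insert_iff, Set.mem_singleton_iff] at hp
      rcases hp with rfl | rfl | rfl <;>
        refine ⟨?_, ?_, ?_⟩ <;>
        simp [Matrix.cons_val_zero, Matrix.cons_val_one, Matrix.head_cons] <;>
        nlinarith [hs]
    · intro p hp q hq a b ha hb hab
      obtain ⟨hp1, hp2, hp3⟩ := hp
      obtain ⟨hq1, hq2, hq3⟩ := hq
      have h1 : (a • p + b • q : EuclideanSpace ℝ (Fin 2)) 1 = a * p 1 + b * q 1 := rfl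
      have h0 : (a • p + b • q : EuclideanSpace ℝ (Fin 2)) 0 = a * p 0 + b * q 0 := rfl
      refine ⟨?_, ?_, ?_⟩ <;> rw [h1] <;> [skip; rw [h0]; rw [h0]] <;> nlinarith [hs,
        mul_le_mul_of_nonneg_left hp2 ha, mul_le_mul_of_nonneg_left hq2 hb,
        mul_le_mul_of_nonneg_left hp3 ha, mul_le_mul_of_nonneg_left hq3 hb,
        mul_nonneg ha hp1, mul_nonneg hb hq1]
  · intro x hx
    obtain ⟨h1, h2, h3⟩ := hx
    have hsne : Real.sqrt 3 ≠ 0 := ne_of_gt hs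
    have hαn : (0:ℝ) ≤ 1 - x 0 - x 1 / Real.sqrt 3 := by
      rw [show (1:ℝ) - x 0 - x 1 / Real.sqrt 3 = (1 - x 0) - x 1 / Real.sqrt 3 by ring,
        sub_nonneg, div_le_iff₀ hs]
      nlinarith
    have hβn : (0:ℝ) ≤ x 0 - x 1 / Real.sqrt 3 := by
      rw [sub_nonneg, div_le_iff₀ hs]; nlinarith
    have hγn : (0:ℝ) ≤ 2 * x 1 / Real.sqrt 3 := by positivity
    have key := Convex.sum_mem (t := (Finset.univ : Finset (Fin 3)))
      (w := ![1 - x 0 - x 1 / Real.sqrt 3, x 0 - x 1 / Real.sqrt 3, 2 * x 1 / Real.sqrt 3])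
      (z := ![(!₂[0, 0] : EuclideanSpace ℝ (Fin 2)), !₂[1, 0], !₂[1/2, Real.sqrt 3 / 2]])
      (convex_convexHull ℝ {(!₂[0, 0] : EuclideanSpace ℝ (Fin 2)), !₂[1, 0],
        !₂[1/2, Real.sqrt 3 / 2]})
      (by intro i _; fin_cases i <;> simp [hαn, hβn, hγn])
      (by rw [Fin.sum_univ_three]; simp only [Matrix.cons_val_zero, Matrix.cons_val_one,
            Matrix.head_cons, Matrix.cons_val_two, Matrix.tail_cons]
          field_simp; ring)
      (by intro i _; fin_cases i <;> simp [subset_convexHull] <;>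
            exact subset_convexHull ℝ _ (by simp))
    rw [Fin.sum_univ_three] at key
    convert key using 1
    · rfl
    refine PiLp.ext fun i => ?_
    fin_cases i <;>
      simp only [Matrix.cons_val_zero, Matrix.cons_val_one, Matrix.head_cons,
        Matrix.cons_val_two, Matrix.tail_cons, PiLp.add_apply, PiLp.smul_apply, smul_eq_mul,
        Fin.mk_zero, Fin.mk_one, Fin.isValue] <;>
      field_simp <;> ring

noncomputable def gfun (x : ℝ) : ℝ := min (Real.sqrt 3 * x) (Real.sqrt 3 * (1 - x))

lemma gfun_cont : Continuous gfun :=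
  (continuous_const.mul continuous_id).min
    (continuous_const.mul (continuous_const.sub continuous_id))

noncomputable def Tset : Set (ℝ × ℝ) :=
  {p | 0 ≤ p.2 ∧ p.2 ≤ Real.sqrt 3 * p.1 ∧ p.2 ≤ Real.sqrt 3 * (1 - p.1)}

lemma vol_graph (f : ℝ → ℝ) (hf : Measurable f) :
    (volume : Measure ℝ).prod volume {p : ℝ × ℝ | p.2 = f p.1} = 0 := by
  rw [Measure.prod_apply (measurableSet_graph hf)]
  have h : ∀ x : ℝ, (Prod.mk x ⁻¹' {p : ℝ × ℝ | p.2 = f p.1}) = {f x} := by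
    intro x; ext y; simp [Set.mem_preimage]
  simp [h]

lemma R_subset_T : regionBetween (fun _ => 0) gfun (Icc 0 1) ⊆ Tset := by
  rintro ⟨x, y⟩ ⟨hx, hy1, hy2⟩
  have h1 : gfun x ≤ Real.sqrt 3 * x := min_le_left _ _
  have h2 : gfun x ≤ Real.sqrt 3 * (1 - x) := min_le_right _ _
  exact ⟨le_of_lt hy1, by simp only; linarith, by simp only; linarith⟩

lemma T_subset : Tset ⊆ regionBetween (fun _ => 0) gfun (Icc 0 1) ∪
    ({p : ℝ × ℝ | p.2 = (fun _ : ℝ => (0:ℝ)) p.1} ∪ {p : ℝ × ℝ | p.2 = gfun p.1}) := by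
  rintro ⟨x, y⟩ ⟨h1, h2, h3⟩
  simp only [Set.mem_setOf_eq] at h1 h2 h3
  have hs : (0:ℝ) < Real.sqrt 3 := Real.sqrt_pos.2 (by norm_num)
  have hx0 : 0 ≤ x := by by_contra h; push_neg at h; nlinarith
  have hx1 : x ≤ 1 := by by_contra h; push_neg at h; nlinarith
  have hyg : y ≤ gfun x := le_min h2 h3
  rcases eq_or_lt_of_le h1 with he | h1'
  · exact Or.inr (Or.inl he.symm)
  rcases eq_or_lt_of_le hyg with he | hyg'
  · exact Or.inr (Or.inr he)
  exact Or.inl ⟨⟨hx0, hx1⟩, h1', hyg'⟩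

lemma vol_T : (volume : Measure ℝ).prod volume Tset
    = (volume : Measure ℝ).prod volume (regionBetween (fun _ => 0) gfun (Icc 0 1)) := by
  apply le_antisymm
  · calc (volume : Measure ℝ).prod volume Tset
        ≤ (volume : Measure ℝ).prod volume (regionBetween (fun _ => 0) gfun (Icc 0 1) ∪
          ({p : ℝ × ℝ | p.2 = (fun _ : ℝ => (0:ℝ)) p.1} ∪ {p : ℝ × ℝ | p.2 = gfun p.1})) :=
          measure_mono T_subset
      _ ≤ (volume : Measure ℝ).prod volume (regionBetween (fun _ => 0) gfun (Icc 0 1)) +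
          ((volume : Measure ℝ).prod volume {p : ℝ × ℝ | p.2 = (fun _ : ℝ => (0:ℝ)) p.1} +
           (volume : Measure ℝ).prod volume {p : ℝ × ℝ | p.2 = gfun p.1}) :=
          le_trans (measure_union_le _ _) (by gcongr; exact measure_union_le _ _)
      _ = (volume : Measure ℝ).prod volume (regionBetween (fun _ => 0) gfun (Icc 0 1)) := by
          rw [vol_graph _ measurable_const, vol_graph _ gfun_cont.measurable]; simp
  · exact measure_mono R_subset_T

lemma integral_g : ∫ x in Set.Icc (0:ℝ) 1, gfun x = Real.sqrt 3 / 4 := by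
  rw [MeasureTheory.integral_Icc_eq_integral_Ioc,
    ← intervalIntegral.integral_of_le (by norm_num : (0:ℝ) ≤ 1)]
  have hi : ∀ a b : ℝ, IntervalIntegrable gfun volume a b := fun a b =>
    gfun_cont.intervalIntegrable a b
  rw [← intervalIntegral.integral_add_adjacent_intervals (hi 0 (1/2)) (hi (1/2) 1)]
  have e1 : ∫ x in (0:ℝ)..(1/2), gfun x = ∫ x in (0:ℝ)..(1/2), Real.sqrt 3 * x := by
    apply intervalIntegral.integral_congr
    intro x hx
    rw [Set.uIcc_of_le (by norm_num)] at hx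
    exact min_eq_left (by nlinarith [Real.sqrt_nonneg 3, hx.1, hx.2])
  have e2 : ∫ x in (1/2:ℝ)..1, gfun x = ∫ x in (1/2:ℝ)..1, (Real.sqrt 3 - Real.sqrt 3 * x) := by
    apply intervalIntegral.integral_congr
    intro x hx
    rw [Set.uIcc_of_le (by norm_num)] at hx
    have : gfun x = Real.sqrt 3 * (1 - x) :=
      min_eq_right (by nlinarith [Real.sqrt_nonneg 3, hx.1, hx.2])
    rw [this]; ring
  rw [e1, e2, intervalIntegral.integral_const_mul, integral_id,
    intervalIntegral.integral_sub intervalIntegrable_const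
      ((by fun_prop : Continuous fun x : ℝ => Real.sqrt 3 * x).intervalIntegrable _ _),
    intervalIntegral.integral_const, intervalIntegral.integral_const_mul, integral_id]
  norm_num
  ring



lemma Tset_meas : MeasurableSet Tset :=
  (measurableSet_le measurable_const measurable_snd).inter
    ((measurableSet_le measurable_snd (measurable_fst.const_mul _)).inter
      (measurableSet_le measurable_snd ((measurable_const.sub measurable_fst).const_mul _)))

lemma preimage_T :
    (⇑(MeasurableEquiv.finTwoArrow) ∘ ⇑(MeasurableEquiv.toLp 2 (Fin 2 → ℝ)).symm) ⁻¹' Tset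
      = Δ := by
  rw [tri_char]; rfl

lemma tri_vol : volume Δ = ENNReal.ofReal (Real.sqrt 3 / 4) := by
  have mp := (volume_preserving_finTwoArrow ℝ).comp
    (EuclideanSpace.volume_preserving_symm_measurableEquiv_toLp (Fin 2))
  have h1 : volume Δ = volume Tset := by
    rw [← preimage_T]
    exact mp.measure_preimage Tset_meas.nullMeasurableSet
  rw [h1, Measure.volume_eq_prod ℝ ℝ, vol_T,
    volume_regionBetween_eq_integral (integrableOn_zero) (gfun_cont.integrableOn_Icc)
      measurableSet_Icc (fun x hx => le_min (mul_nonneg (Real.sqrt_nonneg 3) hx.1)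
        (mul_nonneg (Real.sqrt_nonneg 3) (by linarith [hx.2])))]
  simp only [Pi.sub_apply, sub_zero]
  rw [integral_g]


lemma ball_vol : volume (Metric.closedBall (0 : EuclideanSpace ℝ (Fin 2)) (Real.sqrt 3 / 4)) =
    ENNReal.ofReal (3 * Real.pi / 16) := by
  rw [EuclideanSpace.volume_closedBall]
  have hr : (0:ℝ) ≤ Real.sqrt 3 / 4 := by positivity
  have h3 : Real.sqrt 3 ^ 2 = 3 := Real.sq_sqrt (by norm_num)
  rw [Fintype.card_fin]
  rw [← ENNReal.ofReal_pow hr, ← ENNReal.ofReal_mul (by positivity)]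
  congr 1
  have hg : (Real.Gamma ((2:ℕ) / 2 + 1)) = 1 := by norm_num [Real.Gamma_two]
  rw [hg, Real.sq_sqrt Real.pi_nonneg]
  nlinarith [h3, Real.pi_nonneg]

lemma final_ineq : Real.sqrt 3 / 4 < 3 * Real.pi / 16 := by
  nlinarith [Real.pi_gt_three, Real.sq_sqrt (show (0:ℝ) ≤ 3 by norm_num),
    Real.sqrt_nonneg 3]

end HideAux

theorem disk_hides_behind_triangle_with_larger_area :
    HidesBehind (Metric.closedBall (0 : EuclideanSpace ℝ (Fin 2)) (Real.sqrt 3 / 4)) Δ ∧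
    (∀ u : EuclideanSpace ℝ (Fin 2), ‖u‖ = 1 →
      ∃ a b : EuclideanSpace ℝ (Fin 2),
        proj u '' Δ = segment ℝ a b ∧ Real.sqrt 3 / 2 ≤ ‖b - a‖) ∧
    volume (Metric.closedBall (0 : EuclideanSpace ℝ (Fin 2)) (Real.sqrt 3 / 4)) =
      ENNReal.ofReal (3 * Real.pi / 16) ∧
    volume Δ = ENNReal.ofReal (Real.sqrt 3 / 4) ∧
    Real.sqrt 3 / 4 < 3 * Real.pi / 16 :=
  ⟨HideAux.part1, HideAux.part2, HideAux.ball_vol, HideAux.tri_vol, HideAux.final_ineq⟩
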